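/- Let β > 0, θ > 0, λ > 0, c > 0, b > 0 and let s₃ > 0 > s₄ solve c s² + (θ+λ−βc)s − βθ = 0. Set K = (λ/β) / [(c s₃+θ) e^{s₃ b} − (c s₄+θ) e^{s₄ b}] and F(x) = K(e^{s₃x} − e^{s₄x}) for 0 ≤ x ≤ b. Then F satisfies, for all 0 ≤ x ≤ b: c F'(x) + (θ+λ) F(x) − λ ∫ₓ^b F(u) β e^{−β(u−x)} du − λ e^{−β(b−x)}/β − λ F(b) e^{−β(b−x)} = 0, assuming the denominator (c s₃+θ) e^{s₃ b} − (c s₄+θ) e^{s₄ b} is nonzero. -/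

import Mathlib

open Real Set MeasureTheory


private lemma alg (θ lam β c s₃ s₄ e3 e4 E3 E4 t T D : ℝ)
    (hb3 : s₃ - β ≠ 0) (hb4 : s₄ - β ≠ 0) (ht : t ≠ 0) (hT : T ≠ 0)
    (hDdef : D = (c*s₃+θ)*E3 - (c*s₄+θ)*E4)
    (H₃ : c * s₃ ^ 2 + (θ + lam - β * c) * s₃ - β * θ = 0)
    (H₄ : c * s₄ ^ 2 + (θ + lam - β * c) * s₄ - β * θ = 0) :
    lam * (c*(s₃*e3 - s₄*e4) + (θ+lam)*(e3-e4))
      - lam^2*β*t*((E3/T - e3/t)/(s₃-β) - (E4/T - e4/t)/(s₄-β))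
      - lam*t*D/T
      - lam^2*(E3-E4)*t/T = 0 := by
  field_simp
  linear_combination (lam * (s₄-β) * (T*e3 - t*E3)) * H₃
    - (lam * (s₃-β) * (T*e4 - t*E4)) * H₄
    - (lam * t * (s₃-β) * (s₄-β)) * hDdef

private lemma alg' (θ lam β c s₃ s₄ e3 e4 E3 E4 t T D K : ℝ)
    (hβ : β ≠ 0)
    (hb3 : s₃ - β ≠ 0) (hb4 : s₄ - β ≠ 0) (ht : t ≠ 0) (hT : T ≠ 0)
    (hD : D ≠ 0) (hDdef : D = (c*s₃+θ)*E3 - (c*s₄+θ)*E4)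
    (hK : K = lam / β / D)
    (H₃ : c * s₃ ^ 2 + (θ + lam - β * c) * s₃ - β * θ = 0)
    (H₄ : c * s₄ ^ 2 + (θ + lam - β * c) * s₄ - β * θ = 0) :
    c * (K * (s₃*e3 - s₄*e4)) + (θ+lam) * (K * (e3-e4))
      - lam * (K * β * t * ((E3/T - e3/t)/(s₃-β) - (E4/T - e4/t)/(s₄-β)))
      - lam * (t/T) / β
      - lam * (K * (E3-E4)) * (t/T) = 0 := by
  have hG := alg θ lam β c s₃ s₄ e3 e4 E3 E4 t T D hb3 hb4 ht hT hDdef H₃ H₄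
  have hE : c * (K * (s₃*e3 - s₄*e4)) + (θ+lam) * (K * (e3-e4))
      - lam * (K * β * t * ((E3/T - e3/t)/(s₃-β) - (E4/T - e4/t)/(s₄-β)))
      - lam * (t/T) / β
      - lam * (K * (E3-E4)) * (t/T)
      = (β*D)⁻¹ * (lam * (c*(s₃*e3 - s₄*e4) + (θ+lam)*(e3-e4))
      - lam^2*β*t*((E3/T - e3/t)/(s₃-β) - (E4/T - e4/t)/(s₄-β))
      - lam*t*D/T
      - lam^2*(E3-E4)*t/T) := by
    rw [hK]
    field_simp
  rw [hE, hG, mul_zero]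

private lemma int_exp (a x y : ℝ) (ha : a ≠ 0) :
    ∫ u in x..y, Real.exp (a*u) = (Real.exp (a*y) - Real.exp (a*x)) / a := by
  have hd : ∀ u : ℝ, HasDerivAt (fun v => Real.exp (a*v) / a) (Real.exp (a*u)) u := by
    intro u
    have h1 : HasDerivAt (fun v : ℝ => Real.exp (a*v)) (Real.exp (a*u) * a) u := by
      simpa using ((hasDerivAt_id u).const_mul a).exp
    simpa [mul_div_assoc, mul_div_cancel_right₀ _ ha] using h1.div_const a
  rw [intervalIntegral.integral_eq_sub_of_hasDerivAt (fun u _ => hd u)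
    ((Real.continuous_exp.comp (continuous_const.mul continuous_id)).intervalIntegrable x y)]
  ring

/-- The barrier-strategy return function
`F(x) = K(e^{s₃x} − e^{s₄x})`, with
`K = (λ/β)/[(cs₃+θ)e^{s₃b} − (cs₄+θ)e^{s₄b}]`, satisfies the
integro-differential equation (2.2.9) on `[0,b]`. -/
theorem barrier_value_solves_ide (θ lam β c b s₃ s₄ : ℝ)
    (hθ : 0 < θ) (hlam : 0 < lam) (hβ : 0 < β) (hc : 0 < c) (hb : 0 < b)
    (hs₃ : 0 < s₃) (hs₄ : s₄ < 0)
    (h₃ : c * s₃ ^ 2 + (θ + lam - β * c) * s₃ - β * θ = 0)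
    (h₄ : c * s₄ ^ 2 + (θ + lam - β * c) * s₄ - β * θ = 0)
    (hden : (c * s₃ + θ) * Real.exp (s₃ * b) - (c * s₄ + θ) * Real.exp (s₄ * b) ≠ 0) :
    let K := (lam / β) /
      ((c * s₃ + θ) * Real.exp (s₃ * b) - (c * s₄ + θ) * Real.exp (s₄ * b))
    let F : ℝ → ℝ := fun x => K * (Real.exp (s₃ * x) - Real.exp (s₄ * x))
    ∀ x ∈ Set.Icc (0 : ℝ) b,
      c * deriv F x + (θ + lam) * F x
        - lam * (∫ u in Set.Ioc x b, F u * (β * Real.exp (-β * (u - x))))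
        - lam * Real.exp (-β * (b - x)) / β
        - lam * F b * Real.exp (-β * (b - x)) = 0 := by
  intro K F x hx
  have hxb : x ≤ b := hx.2
  have hb3 : s₃ - β ≠ 0 := by
    intro h
    have hs : s₃ = β := by linarith
    have : lam * β = 0 := by rw [hs] at h₃; linear_combination h₃
    nlinarith
  have hb4 : s₄ - β ≠ 0 := by
    intro h
    have hs : s₄ = β := by linarith
    have : lam * β = 0 := by rw [hs] at h₄; linear_combination h₄
    nlinarith
  have hK : K = lam / β / ((c * s₃ + θ) * Real.exp (s₃ * b) - (c * s₄ + θ) * Real.exp (s₄ * b)) := rfl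
  have hF : ∀ y, F y = K * (Real.exp (s₃ * y) - Real.exp (s₄ * y)) := fun _ => rfl
  -- derivative
  have hder : deriv F x = K * (s₃ * Real.exp (s₃ * x) - s₄ * Real.exp (s₄ * x)) := by
    have h1 : HasDerivAt (fun y : ℝ => Real.exp (s₃ * y)) (s₃ * Real.exp (s₃ * x)) x := by
      simpa [mul_comm] using ((hasDerivAt_id x).const_mul s₃).exp
    have h2 : HasDerivAt (fun y : ℝ => Real.exp (s₄ * y)) (s₄ * Real.exp (s₄ * x)) x := by
      simpa [mul_comm] using ((hasDerivAt_id x).const_mul s₄).exp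
    have h3 : HasDerivAt F (K * (s₃ * Real.exp (s₃ * x) - s₄ * Real.exp (s₄ * x))) x :=
      ((h1.sub h2).const_mul K)
    exact h3.deriv
  -- integral
  have hint : (∫ u in Set.Ioc x b, F u * (β * Real.exp (-β * (u - x))))
      = K * β * Real.exp (β*x) *
        ((Real.exp ((s₃-β)*b) - Real.exp ((s₃-β)*x))/(s₃-β)
          - (Real.exp ((s₄-β)*b) - Real.exp ((s₄-β)*x))/(s₄-β)) := by
    rw [← intervalIntegral.integral_of_le hxb]
    have hcong : ∀ u ∈ Set.uIcc x b,
        F u * (β * Real.exp (-β * (u - x)))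
          = (K * β * Real.exp (β*x)) * (Real.exp ((s₃-β)*u) - Real.exp ((s₄-β)*u)) := by
      intro u _
      rw [hF]
      have A : Real.exp ((s₃-β)*u) * Real.exp (β*x) = Real.exp (s₃*u) * Real.exp (-β*(u-x)) := by
        rw [← Real.exp_add, ← Real.exp_add]; ring_nf
      have B : Real.exp ((s₄-β)*u) * Real.exp (β*x) = Real.exp (s₄*u) * Real.exp (-β*(u-x)) := by
        rw [← Real.exp_add, ← Real.exp_add]; ring_nf
      linear_combination (K*β)*B - (K*β)*A
    rw [intervalIntegral.integral_congr hcong]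
    have i3 : IntervalIntegrable (fun u => Real.exp ((s₃-β)*u)) volume x b :=
      (Real.continuous_exp.comp (continuous_const.mul continuous_id)).intervalIntegrable x b
    have i4 : IntervalIntegrable (fun u => Real.exp ((s₄-β)*u)) volume x b :=
      (Real.continuous_exp.comp (continuous_const.mul continuous_id)).intervalIntegrable x b
    rw [intervalIntegral.integral_const_mul, intervalIntegral.integral_sub i3 i4,
      int_exp _ _ _ hb3, int_exp _ _ _ hb4]
  -- exponential identities
  have hE3b : Real.exp ((s₃-β)*b) = Real.exp (s₃*b) / Real.exp (β*b) := by
    rw [show (s₃-β)*b = s₃*b - β*b by ring, Real.exp_sub]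
  have hE4b : Real.exp ((s₄-β)*b) = Real.exp (s₄*b) / Real.exp (β*b) := by
    rw [show (s₄-β)*b = s₄*b - β*b by ring, Real.exp_sub]
  have hE3x : Real.exp ((s₃-β)*x) = Real.exp (s₃*x) / Real.exp (β*x) := by
    rw [show (s₃-β)*x = s₃*x - β*x by ring, Real.exp_sub]
  have hE4x : Real.exp ((s₄-β)*x) = Real.exp (s₄*x) / Real.exp (β*x) := by
    rw [show (s₄-β)*x = s₄*x - β*x by ring, Real.exp_sub]
  have hEB : Real.exp (-β*(b-x)) = Real.exp (β*x) / Real.exp (β*b) := by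
    rw [show -β*(b-x) = β*x - β*b by ring, Real.exp_sub]
  rw [hder, hint, hEB, hE3b, hE4b, hE3x, hE4x, hF x, hF b]
  have key := alg' θ lam β c s₃ s₄ (Real.exp (s₃*x)) (Real.exp (s₄*x))
    (Real.exp (s₃*b)) (Real.exp (s₄*b)) (Real.exp (β*x)) (Real.exp (β*b))
    ((c * s₃ + θ) * Real.exp (s₃ * b) - (c * s₄ + θ) * Real.exp (s₄ * b)) K
    hβ.ne' hb3 hb4 (Real.exp_ne_zero _) (Real.exp_ne_zero _) hden rfl hK h₃ h₄
  linear_combination key
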